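/- Let (Ω,Σ) be a measurable space, T = (T_t)_{t∈(0,∞)} a bounded semigroup of kernel operators on B_b(Ω), and S = (S_t)_{t∈(0,∞)} := (T_t')_{t∈(0,∞)} the dual semigroup of kernel operators on M(Ω). Then the following are equivalent: (i) for each μ ∈ M(Ω), S_t μ converges with respect to the topology σ(M(Ω),B_b(Ω)) to a measure Pμ ∈ M(Ω) as t → ∞; (ii) for each f ∈ B_b(Ω), T_t f converges with respect to the topology σ(B_b(Ω),M(Ω)) to a function Qf ∈ B_b(Ω) as t → ∞. -/

import Mathlib

open MeasureTheory Filter Topology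

/-- The integral `∫ f dμ` of a function against a finite signed measure, defined via the
Jordan decomposition of `μ`. -/
noncomputable def sInt {Ω : Type*} [MeasurableSpace Ω] (μ : SignedMeasure Ω) (f : Ω → ℝ) : ℝ :=
  (∫ x, f x ∂μ.toJordanDecomposition.posPart) - ∫ x, f x ∂μ.toJordanDecomposition.negPart

/-- `f` belongs to `B_b(Ω)`, i.e. `f` is a bounded measurable real-valued function. -/
def IsBddMeas {Ω : Type*} [MeasurableSpace Ω] (f : Ω → ℝ) : Prop :=
  Measurable f ∧ ∃ C : ℝ, ∀ x, |f x| ≤ C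

/-- The total variation norm of a finite signed measure. -/
noncomputable def tvNorm {Ω : Type*} [MeasurableSpace Ω] (μ : SignedMeasure Ω) : ℝ :=
  (μ.totalVariation Set.univ).toReal

/-- A bounded kernel on `Ω`: `x ↦ k x` is a family of finite signed measures such that
`x ↦ k x A` is measurable for every measurable `A` and `sup_x |k x|(Ω) < ∞`. -/
def IsBoundedKernel {Ω : Type*} [MeasurableSpace Ω] (k : Ω → SignedMeasure Ω) : Prop :=
  (∀ A : Set Ω, MeasurableSet A → Measurable fun x => k x A) ∧
    ∃ C : ℝ, ∀ x, tvNorm (k x) ≤ C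

open scoped ENNReal NNReal symmDiff

namespace SigAux


variable {Ω : Type*} [MeasurableSpace Ω]

lemma integrable_of_bdd {f : Ω → ℝ} {c : ℝ} (hf : Measurable f) (hc : ∀ x, |f x| ≤ c)
    (m : Measure Ω) [IsFiniteMeasure m] : Integrable f m :=
  (integrable_const c).mono' hf.aestronglyMeasurable
    (Filter.Eventually.of_forall fun x => by simpa using hc x)

lemma sm_apply (ν : SignedMeasure Ω) {A : Set Ω} (hA : MeasurableSet A) :
    ν A = (ν.toJordanDecomposition.posPart A).toReal
      - (ν.toJordanDecomposition.negPart A).toReal := by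
  conv_lhs => rw [← ν.toSignedMeasure_toJordanDecomposition]
  rw [JordanDecomposition.toSignedMeasure, Measure.toSignedMeasure_sub_apply hA]
  simp only [Measure.real]

instance (ν : SignedMeasure Ω) : IsFiniteMeasure ν.totalVariation :=
  inferInstanceAs (IsFiniteMeasure
    (ν.toJordanDecomposition.posPart + ν.toJordanDecomposition.negPart))

lemma tvNorm_nonneg (ν : SignedMeasure Ω) : 0 ≤ tvNorm ν := ENNReal.toReal_nonneg

lemma tv_apply (ν : SignedMeasure Ω) (A : Set Ω) :
    (ν.totalVariation A).toReal = (ν.toJordanDecomposition.posPart A).toReal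
      + (ν.toJordanDecomposition.negPart A).toReal := by
  rw [SignedMeasure.totalVariation, Measure.add_apply,
    ENNReal.toReal_add (measure_ne_top _ _) (measure_ne_top _ _)]

lemma abs_apply_le (ν : SignedMeasure Ω) (A : Set Ω) : |ν A| ≤ (ν.totalVariation A).toReal := by
  by_cases hA : MeasurableSet A
  · rw [sm_apply ν hA, tv_apply]
    have h1 : (0:ℝ) ≤ (ν.toJordanDecomposition.posPart A).toReal := ENNReal.toReal_nonneg
    have h2 : (0:ℝ) ≤ (ν.toJordanDecomposition.negPart A).toReal := ENNReal.toReal_nonneg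
    rw [abs_le]; constructor <;> linarith
  · rw [VectorMeasure.not_measurable _ hA]
    simpa using ENNReal.toReal_nonneg

lemma abs_apply_le_tvNorm (ν : SignedMeasure Ω) (A : Set Ω) : |ν A| ≤ tvNorm ν :=
  (abs_apply_le ν A).trans (ENNReal.toReal_mono (measure_ne_top _ _)
    (measure_mono (Set.subset_univ A)))

lemma tvNorm_eq (ν : SignedMeasure Ω) :
    tvNorm ν = (ν.toJordanDecomposition.posPart Set.univ).toReal
      + (ν.toJordanDecomposition.negPart Set.univ).toReal := tv_apply ν Set.univ

lemma tvNorm_le_of_bound (ν : SignedMeasure Ω) {M : ℝ}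
    (h : ∀ A : Set Ω, MeasurableSet A → |ν A| ≤ M) : tvNorm ν ≤ 2 * M := by
  obtain ⟨i, hi₁, hi₂, hi₃, hpos, hneg⟩ := ν.toJordanDecomposition_spec
  have h1 : (ν.toJordanDecomposition.posPart Set.univ).toReal = ν (i ∩ Set.univ) := by
    rw [hpos, SignedMeasure.toMeasureOfZeroLE_apply _ hi₂ hi₁ MeasurableSet.univ]
    simp
  have h2 : (ν.toJordanDecomposition.negPart Set.univ).toReal = -ν (iᶜ ∩ Set.univ) := by
    rw [hneg, SignedMeasure.toMeasureOfLEZero_apply _ hi₃ hi₁.compl MeasurableSet.univ]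
    simp
  have h3 := h (i ∩ Set.univ) (hi₁.inter MeasurableSet.univ)
  have h4 := h (iᶜ ∩ Set.univ) (hi₁.compl.inter MeasurableSet.univ)
  rw [tvNorm_eq, h1, h2]
  rw [abs_le] at h3 h4
  linarith

lemma sInt_add (ν : SignedMeasure Ω) {f g : Ω → ℝ} (hf : IsBddMeas f) (hg : IsBddMeas g) :
    sInt ν (fun x => f x + g x) = sInt ν f + sInt ν g := by
  obtain ⟨hfm, cf, hcf⟩ := hf
  obtain ⟨hgm, cg, hcg⟩ := hg
  unfold sInt
  rw [integral_add (integrable_of_bdd hfm hcf _) (integrable_of_bdd hgm hcg _),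
      integral_add (integrable_of_bdd hfm hcf _) (integrable_of_bdd hgm hcg _)]
  ring

lemma sInt_mul (ν : SignedMeasure Ω) (c : ℝ) (f : Ω → ℝ) :
    sInt ν (fun x => c * f x) = c * sInt ν f := by
  unfold sInt
  rw [integral_const_mul, integral_const_mul]
  ring

lemma isBddMeas_const_mul {f : Ω → ℝ} (hf : IsBddMeas f) (c : ℝ) :
    IsBddMeas (fun x => c * f x) := by
  obtain ⟨hfm, cf, hcf⟩ := hf
  exact ⟨hfm.const_mul c, |c| * cf, fun x => by
    rw [abs_mul]
    exact mul_le_mul_of_nonneg_left (hcf x) (abs_nonneg c)⟩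

lemma sInt_sub (ν : SignedMeasure Ω) {f g : Ω → ℝ} (hf : IsBddMeas f) (hg : IsBddMeas g) :
    sInt ν (fun x => f x - g x) = sInt ν f - sInt ν g := by
  have h : (fun x => f x - g x) = fun x => f x + (-1) * g x := by funext x; ring
  rw [h, sInt_add ν hf (isBddMeas_const_mul hg (-1)), sInt_mul]
  ring

lemma sInt_indicator (ν : SignedMeasure Ω) {A : Set Ω} (hA : MeasurableSet A) (c : ℝ) :
    sInt ν (A.indicator fun _ => c) = c * ν A := by
  unfold sInt
  rw [integral_indicator_const c hA, integral_indicator_const c hA, sm_apply ν hA]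
  simp only [smul_eq_mul]
  simp only [Measure.real]
  ring

lemma sInt_abs_le (ν : SignedMeasure Ω) {f : Ω → ℝ} {c : ℝ} (hf : Measurable f)
    (hc : ∀ x, |f x| ≤ c) : |sInt ν f| ≤ c * tvNorm ν := by
  unfold sInt
  have h1 : ‖∫ x, f x ∂ν.toJordanDecomposition.posPart‖
      ≤ c * (ν.toJordanDecomposition.posPart Set.univ).toReal :=
    norm_integral_le_of_norm_le_const (Filter.Eventually.of_forall fun x => by simpa using hc x)
  have h2 : ‖∫ x, f x ∂ν.toJordanDecomposition.negPart‖
      ≤ c * (ν.toJordanDecomposition.negPart Set.univ).toReal :=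
    norm_integral_le_of_norm_le_const (Filter.Eventually.of_forall fun x => by simpa using hc x)
  rw [Real.norm_eq_abs] at h1 h2
  rw [tvNorm_eq]
  rw [abs_le] at h1 h2 ⊢
  constructor <;> nlinarith

lemma isBddMeas_sum {ι : Type*} {s : Finset ι} {F : ι → Ω → ℝ} (h : ∀ i ∈ s, IsBddMeas (F i)) :
    IsBddMeas (fun x => ∑ i ∈ s, F i x) := by
  classical
  induction s using Finset.induction_on with
  | empty => exact ⟨measurable_const, 0, fun x => by simp⟩
  | insert a s' hni ih =>
    have ha := h a (Finset.mem_insert_self a s')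
    have hs := ih fun i hi => h i (Finset.mem_insert_of_mem hi)
    obtain ⟨h1m, c1, hc1⟩ := ha
    obtain ⟨h2m, c2, hc2⟩ := hs
    refine ⟨?_, c1 + c2, fun x => ?_⟩
    · simp only [Finset.sum_insert hni]; exact h1m.add h2m
    · simp only [Finset.sum_insert hni]
      exact (abs_add_le _ _).trans (add_le_add (hc1 x) (hc2 x))

lemma sInt_sum {ι : Type*} (ν : SignedMeasure Ω) {s : Finset ι} {F : ι → Ω → ℝ}
    (h : ∀ i ∈ s, IsBddMeas (F i)) :
    sInt ν (fun x => ∑ i ∈ s, F i x) = ∑ i ∈ s, sInt ν (F i) := by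
  classical
  induction s using Finset.induction_on with
  | empty => simp [sInt]
  | insert a s' hni ih =>
    have ha := h a (Finset.mem_insert_self a s')
    have hs : ∀ i ∈ s', IsBddMeas (F i) := fun i hi => h i (Finset.mem_insert_of_mem hi)
    have : (fun x => ∑ i ∈ insert a s', F i x) = fun x => F a x + ∑ i ∈ s', F i x := by
      funext x; rw [Finset.sum_insert hni]
    rw [this, sInt_add ν ha (isBddMeas_sum hs), ih hs, Finset.sum_insert hni]


lemma sInt_tendsto {ι : Type*} {l : Filter ι} [l.IsCountablyGenerated] (ν : SignedMeasure Ω)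
    {F : ι → Ω → ℝ} {f : Ω → ℝ} {c : ℝ}
    (hFm : ∀ᶠ i in l, Measurable (F i)) (hFb : ∀ᶠ i in l, ∀ x, |F i x| ≤ c)
    (hf : ∀ x, Tendsto (fun i => F i x) l (𝓝 (f x))) :
    Tendsto (fun i => sInt ν (F i)) l (𝓝 (sInt ν f)) := by
  unfold sInt
  apply Tendsto.sub <;>
  exact tendsto_integral_filter_of_dominated_convergence (fun _ => c)
    (hFm.mono fun i hi => hi.aestronglyMeasurable)
    (hFb.mono fun i hi => Filter.Eventually.of_forall fun x => by simpa using hi x)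
    (integrable_const c) (Filter.Eventually.of_forall fun x => hf x)

lemma isBddMeas_indicator {A : Set Ω} (hA : MeasurableSet A) (c : ℝ) :
    IsBddMeas (A.indicator fun _ => c) := by
  refine ⟨measurable_const.indicator hA, |c|, fun x => ?_⟩
  by_cases h : x ∈ A <;> simp [Set.indicator_apply, h, abs_nonneg]

lemma sInt_finite_range (ν : SignedMeasure Ω) {g : Ω → ℝ} (hg : Measurable g)
    (hfin : (Set.range g).Finite) :
    sInt ν g = ∑ v ∈ hfin.toFinset, v * ν (g ⁻¹' {v}) := by
  have hrep : g = fun x => ∑ v ∈ hfin.toFinset, (g ⁻¹' {v}).indicator (fun _ => v) x := by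
    funext x
    rw [Finset.sum_eq_single_of_mem (g x) (by simp [hfin.mem_toFinset])]
    · simp [Set.indicator_of_mem, Set.mem_preimage]
    · intro v _ hne
      have hx : x ∉ g ⁻¹' {v} := by
        intro h
        exact hne (Eq.symm (by simpa using h))
      simp [Set.indicator_of_notMem hx]
  conv_lhs => rw [hrep]
  rw [sInt_sum ν (fun v _ => isBddMeas_indicator (hg (measurableSet_singleton v)) v)]
  exact Finset.sum_congr rfl fun v _ => sInt_indicator ν (hg (measurableSet_singleton v)) v

lemma exists_finite_range_approx {f : Ω → ℝ} (hf : Measurable f) {c : ℝ} (hc : ∀ x, |f x| ≤ c)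
    {ε : ℝ} (hε : 0 < ε) :
    ∃ g : Ω → ℝ, Measurable g ∧ (Set.range g).Finite ∧ (∀ x, |g x - f x| ≤ ε)
      ∧ (∀ x, |g x| ≤ c + ε) := by
  refine ⟨fun x => ε * (⌊f x / ε⌋ : ℤ), ?_, ?_, ?_, ?_⟩
  · exact measurable_from_top.comp ((hf.div_const ε).floor) |>.const_mul ε |>.comp measurable_id
      |>.mono le_rfl le_rfl
  · have : Set.range (fun x => ε * (⌊f x / ε⌋ : ℤ)) ⊆
        (fun z : ℤ => ε * (z:ℝ)) '' (Set.Icc ⌊-c / ε⌋ ⌊c / ε⌋) := by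
      rintro y ⟨x, rfl⟩
      refine ⟨⌊f x / ε⌋, ⟨?_, ?_⟩, rfl⟩
      · exact Int.floor_le_floor (by rw [div_le_div_iff_of_pos_right hε]; linarith [abs_le.1 (hc x)])
      · exact Int.floor_le_floor (by rw [div_le_div_iff_of_pos_right hε]; linarith [abs_le.1 (hc x)])
    exact ((Set.finite_Icc _ _).image _).subset this
  · intro x
    have ha : ε * (⌊f x / ε⌋ : ℤ) ≤ f x := by
      calc ε * (⌊f x / ε⌋ : ℤ) ≤ ε * (f x / ε) :=
            mul_le_mul_of_nonneg_left (Int.floor_le (f x / ε)) hε.le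
        _ = f x := by field_simp
    have hb : f x < ε * (⌊f x / ε⌋ : ℤ) + ε := by
      have : ε * (f x / ε) < ε * ((⌊f x / ε⌋ : ℤ) + 1) :=
        (mul_lt_mul_iff_right₀ hε).2 (Int.lt_floor_add_one (f x / ε))
      have h' : ε * (f x / ε) = f x := by field_simp
      nlinarith
    rw [abs_le]
    constructor <;> simp only [] <;> linarith
  · intro x
    have h1 : |ε * (⌊f x / ε⌋ : ℤ) - f x| ≤ ε := by
      have ha : ε * (⌊f x / ε⌋ : ℤ) ≤ f x := by
        calc ε * (⌊f x / ε⌋ : ℤ) ≤ ε * (f x / ε) :=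
              mul_le_mul_of_nonneg_left (Int.floor_le (f x / ε)) hε.le
          _ = f x := by field_simp
      have hb : f x < ε * (⌊f x / ε⌋ : ℤ) + ε := by
        have : ε * (f x / ε) < ε * ((⌊f x / ε⌋ : ℤ) + 1) :=
          (mul_lt_mul_iff_right₀ hε).2 (Int.lt_floor_add_one (f x / ε))
        have h' : ε * (f x / ε) = f x := by field_simp
        nlinarith
      rw [abs_le]; constructor <;> linarith
    calc |ε * (⌊f x / ε⌋ : ℤ)| ≤ |ε * (⌊f x / ε⌋ : ℤ) - f x| + |f x| := by
          have := abs_add_le (ε * (⌊f x / ε⌋ : ℤ) - f x) (f x); simpa using this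
      _ ≤ c + ε := by linarith [hc x, h1]

lemma apply_sub_apply (ν : SignedMeasure Ω) {A B : Set Ω} (hA : MeasurableSet A)
    (hB : MeasurableSet B) : ν A - ν B = ν (A \ B) - ν (B \ A) := by
  have hd1 : Disjoint (A ∩ B) (A \ B) :=
    Disjoint.mono_left Set.inter_subset_right disjoint_sdiff_self_right
  have hd2 : Disjoint (B ∩ A) (B \ A) :=
    Disjoint.mono_left Set.inter_subset_right disjoint_sdiff_self_right
  have h1 : ν A = ν (A ∩ B) + ν (A \ B) := by
    rw [← VectorMeasure.of_union hd1 (hA.inter hB) (hA.diff hB), Set.inter_union_diff]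
  have h2 : ν B = ν (B ∩ A) + ν (B \ A) := by
    rw [← VectorMeasure.of_union hd2 (hB.inter hA) (hB.diff hA), Set.inter_union_diff]
  rw [h1, h2, Set.inter_comm B A]
  ring

lemma sInt_toSignedMeasure (μ0 : Measure Ω) [IsFiniteMeasure μ0] (g : Ω → ℝ) :
    sInt μ0.toSignedMeasure g = ∫ x, g x ∂μ0 := by
  have h : μ0.toSignedMeasure.toJordanDecomposition
      = ⟨μ0, 0, Measure.MutuallySingular.zero_right⟩ := by
    apply SignedMeasure.toJordanDecomposition_eq
    show μ0.toSignedMeasure = JordanDecomposition.toSignedMeasure _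
    rw [JordanDecomposition.toSignedMeasure]
    show μ0.toSignedMeasure = μ0.toSignedMeasure - (0 : Measure Ω).toSignedMeasure
    rw [Measure.toSignedMeasure_zero, sub_zero]
  rw [sInt, h]
  simp


/-- The measure algebra of a finite measure `m`: measurable sets with the
pseudometric `dist A B = m (A ∆ B)`. -/
structure MSet (m : Measure Ω) where
  carrier : Set Ω
  meas : MeasurableSet carrier

namespace MSet

variable {m : Measure Ω} [IsFiniteMeasure m]

noncomputable instance : PseudoMetricSpace (MSet m) where
  dist A B := (m (symmDiff A.carrier B.carrier)).toReal
  dist_self A := by simp [symmDiff_self]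
  dist_comm A B := by simp [symmDiff_comm]
  dist_triangle A B C := by
    have hsub : symmDiff A.carrier C.carrier ⊆
        symmDiff A.carrier B.carrier ∪ symmDiff B.carrier C.carrier := symmDiff_triangle _ _ _
    have h1 : m (symmDiff A.carrier C.carrier)
        ≤ m (symmDiff A.carrier B.carrier) + m (symmDiff B.carrier C.carrier) :=
      (measure_mono hsub).trans (measure_union_le _ _)
    have := ENNReal.toReal_mono (by finiteness) h1
    rwa [ENNReal.toReal_add (by finiteness) (by finiteness)] at this

lemma dist_def (A B : MSet m) : dist A B = (m (symmDiff A.carrier B.carrier)).toReal := rfl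

lemma exists_switch {P : ℕ → Prop} {n : ℕ} (hn : P n) (hex : ∃ k, n ≤ k ∧ ¬ P k) :
    ∃ j, n ≤ j ∧ P j ∧ ¬ P (j + 1) := by
  by_contra h
  push_neg at h
  have hind : ∀ d, P (n + d) := by
    intro d
    induction d with
    | zero => simpa using hn
    | succ d ih => exact h (n + d) (Nat.le_add_right _ _) ih
  obtain ⟨k, hk, hPk⟩ := hex
  have h2 := hind (k - n)
  rw [Nat.add_sub_cancel' hk] at h2
  exact hPk h2

instance : CompleteSpace (MSet m) := by
  apply Metric.complete_of_convergent_controlled_sequences (fun n => (1/2 : ℝ)^n)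
    (fun n => by positivity)
  intro u hu
  set A : Set Ω := ⋂ N, ⋃ k, ⋃ (_ : N ≤ k), (u k).carrier with hA
  have hAmeas : MeasurableSet A :=
    MeasurableSet.iInter fun N => MeasurableSet.iUnion fun k =>
      MeasurableSet.iUnion fun _ => (u k).meas
  refine ⟨⟨A, hAmeas⟩, ?_⟩
  have key : ∀ n, symmDiff (u n).carrier A ⊆
      ⋃ j, ⋃ (_ : n ≤ j), symmDiff (u j).carrier ((u (j+1)).carrier) := by
    intro n x hx
    rw [Set.mem_symmDiff] at hx
    rcases hx with ⟨hxu, hxA⟩ | ⟨hxA, hxu⟩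
    · -- x ∈ u n, x ∉ A
      have : ∃ N, ∀ k, N ≤ k → x ∉ (u k).carrier := by
        by_contra hcon
        push_neg at hcon
        apply hxA
        simp only [hA, Set.mem_iInter, Set.mem_iUnion]
        intro N
        obtain ⟨k, hk, hxk⟩ := hcon N
        exact ⟨k, hk, hxk⟩
      obtain ⟨N, hN⟩ := this
      obtain ⟨j, hj, hPj, hPj1⟩ := exists_switch (P := fun k => x ∈ (u k).carrier) hxu
        ⟨max n N, le_max_left _ _, hN _ (le_max_right _ _)⟩
      refine Set.mem_iUnion.2 ⟨j, Set.mem_iUnion.2 ⟨hj, ?_⟩⟩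
      rw [Set.mem_symmDiff]
      exact Or.inl ⟨hPj, hPj1⟩
    · -- x ∈ A, x ∉ u n
      have hex : ∃ k, n ≤ k ∧ x ∈ (u k).carrier := by
        have := Set.mem_iInter.1 hxA n
        simp only [Set.mem_iUnion] at this
        obtain ⟨k, hk, hxk⟩ := this
        exact ⟨k, hk, hxk⟩
      obtain ⟨j, hj, hPj, hPj1⟩ := exists_switch (P := fun k => x ∉ (u k).carrier) hxu
        (by obtain ⟨k, hk, hxk⟩ := hex; exact ⟨k, hk, fun h => h hxk⟩)
      refine Set.mem_iUnion.2 ⟨j, Set.mem_iUnion.2 ⟨hj, ?_⟩⟩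
      rw [Set.mem_symmDiff]
      exact Or.inr ⟨not_not.1 hPj1, hPj⟩
  have hd : ∀ j : ℕ, m (symmDiff (u j).carrier ((u (j+1)).carrier))
      ≤ ENNReal.ofReal ((1/2 : ℝ)^j) := by
    intro j
    have hj := hu j j (j+1) le_rfl (by omega)
    rw [dist_def] at hj
    exact (ENNReal.le_ofReal_iff_toReal_le (by finiteness) (by positivity)).2 hj.le
  have hbound : ∀ n : ℕ, dist (u n) (⟨A, hAmeas⟩ : MSet m) ≤ (1/2:ℝ)^n * 2 := by
    intro n
    have h1 : m (symmDiff (u n).carrier A)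
        ≤ ∑' i : ℕ, ENNReal.ofReal ((1/2:ℝ)^(n + i)) := by
      have hre : (⋃ j, ⋃ (_ : n ≤ j), symmDiff (u j).carrier ((u (j+1)).carrier))
          = ⋃ i : ℕ, symmDiff ((u (n+i)).carrier) ((u (n+i+1)).carrier) := by
        ext x
        simp only [Set.mem_iUnion]
        constructor
        · rintro ⟨j, hj, hx⟩
          exact ⟨j - n, by rwa [Nat.add_sub_cancel' hj]⟩
        · rintro ⟨i, hx⟩
          exact ⟨n + i, Nat.le_add_right _ _, hx⟩
      calc m (symmDiff (u n).carrier A) ≤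
          m (⋃ i : ℕ, symmDiff ((u (n+i)).carrier) ((u (n+i+1)).carrier)) := by
            rw [← hre]; exact measure_mono (key n)
        _ ≤ ∑' i : ℕ, m (symmDiff ((u (n+i)).carrier) ((u (n+i+1)).carrier)) :=
            measure_iUnion_le _
        _ ≤ ∑' i : ℕ, ENNReal.ofReal ((1/2:ℝ)^(n + i)) := ENNReal.tsum_le_tsum fun i => hd (n+i)
    have h2 : (∑' i : ℕ, ENNReal.ofReal ((1/2:ℝ)^(n + i)))
        = ENNReal.ofReal ((1/2:ℝ)^n * 2) := by
      have : ∀ i : ℕ, ENNReal.ofReal ((1/2:ℝ)^(n + i))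
          = ENNReal.ofReal ((1/2:ℝ)^n) * ENNReal.ofReal ((1/2:ℝ)^i) := by
        intro i
        rw [pow_add, ENNReal.ofReal_mul (by positivity)]
      rw [tsum_congr this, ENNReal.tsum_mul_left,
        ← ENNReal.ofReal_tsum_of_nonneg (fun i => by positivity) summable_geometric_two,
        tsum_geometric_two, ← ENNReal.ofReal_mul (by positivity)]
    rw [dist_def]
    exact ENNReal.toReal_le_of_le_ofReal (by positivity) (h1.trans (le_of_eq h2))
  have hz : Tendsto (fun n : ℕ => (1/2:ℝ)^n * 2) atTop (𝓝 0) := by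
    have := (tendsto_pow_atTop_nhds_zero_of_lt_one (by norm_num : (0:ℝ) ≤ 1/2)
      (by norm_num : (1/2:ℝ) < 1)).mul_const 2
    simpa using this
  rw [tendsto_iff_dist_tendsto_zero]
  exact squeeze_zero (fun n => dist_nonneg) hbound hz

end MSet

/-- The Nikodym convergence theorem: a setwise limit of finite signed measures
is a signed measure. -/
theorem nikodym (ν : ℕ → SignedMeasure Ω) (lam : Set Ω → ℝ)
    (hconv : ∀ A : Set Ω, MeasurableSet A → Tendsto (fun n => ν n A) atTop (𝓝 (lam A)))
    (hlam0 : ∀ A : Set Ω, ¬ MeasurableSet A → lam A = 0) :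
    ∃ P : SignedMeasure Ω, ∀ A : Set Ω, P A = lam A := by
  classical
  -- the dominating finite measure
  set w : ℕ → ℝ≥0∞ := fun n => (1/2)^n * ((ν n).totalVariation Set.univ + 1)⁻¹ with hw
  have hwne0 : ∀ n, w n ≠ 0 := by
    intro n
    apply mul_ne_zero
    · rw [one_div]
      exact pow_ne_zero n (ENNReal.inv_ne_zero.2 ENNReal.ofNat_ne_top)
    · rw [ENNReal.inv_ne_zero]
      exact ENNReal.add_ne_top.2 ⟨measure_ne_top _ _, ENNReal.one_ne_top⟩
  have hwnetop : ∀ n, w n ≠ ⊤ := by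
    intro n
    apply ENNReal.mul_ne_top
    · exact ENNReal.pow_ne_top (by simp)
    · rw [ENNReal.inv_ne_top]
      simp
  set m : Measure Ω := Measure.sum (fun n => w n • (ν n).totalVariation) with hm
  haveI : IsFiniteMeasure m := by
    constructor
    rw [hm, Measure.sum_apply _ MeasurableSet.univ]
    have hle : ∀ n, (w n • (ν n).totalVariation) Set.univ ≤ (1/2 : ℝ≥0∞)^n := by
      intro n
      rw [Measure.smul_apply, smul_eq_mul, hw]
      have h1 : ((ν n).totalVariation Set.univ + 1)⁻¹ * (ν n).totalVariation Set.univ ≤ 1 := by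
        have h0 : ((ν n).totalVariation Set.univ + 1)⁻¹ * ((ν n).totalVariation Set.univ + 1)
            = 1 := ENNReal.inv_mul_cancel (by simp)
          (ENNReal.add_ne_top.2 ⟨measure_ne_top _ _, ENNReal.one_ne_top⟩)
        calc ((ν n).totalVariation Set.univ + 1)⁻¹ * (ν n).totalVariation Set.univ
            ≤ ((ν n).totalVariation Set.univ + 1)⁻¹ * ((ν n).totalVariation Set.univ + 1) :=
              mul_le_mul_right (self_le_add_right _ _) _
          _ = 1 := h0
      calc (1/2:ℝ≥0∞)^n * ((ν n).totalVariation Set.univ + 1)⁻¹ * (ν n).totalVariation Set.univ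
          = (1/2:ℝ≥0∞)^n * (((ν n).totalVariation Set.univ + 1)⁻¹
            * (ν n).totalVariation Set.univ) := by ring
        _ ≤ (1/2:ℝ≥0∞)^n * 1 := mul_le_mul_right h1 _
        _ = (1/2:ℝ≥0∞)^n := mul_one _
    calc ∑' n, (w n • (ν n).totalVariation) Set.univ ≤ ∑' n, (1/2:ℝ≥0∞)^n :=
          ENNReal.tsum_le_tsum hle
      _ = (1 - 1/2)⁻¹ := ENNReal.tsum_geometric _
      _ < ⊤ := ENNReal.inv_lt_top.2 (tsub_pos_of_lt (by
          rw [one_div]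
          exact ENNReal.inv_lt_one.2 ENNReal.one_lt_two))
  -- pointwise domination
  have hdom : ∀ n (A : Set Ω), MeasurableSet A →
      |ν n A| ≤ ((w n)⁻¹).toReal * (m A).toReal := by
    intro n A hA
    have h1 : w n * (ν n).totalVariation A ≤ m A := by
      rw [hm, Measure.sum_apply _ hA]
      calc w n * (ν n).totalVariation A = (w n • (ν n).totalVariation) A := by
            rw [Measure.smul_apply, smul_eq_mul]
        _ ≤ ∑' j, (w j • (ν j).totalVariation) A := ENNReal.le_tsum n
    have h2 : (ν n).totalVariation A ≤ (w n)⁻¹ * m A := by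
      rw [← one_mul ((ν n).totalVariation A), ← ENNReal.inv_mul_cancel (hwne0 n) (hwnetop n),
        mul_assoc]
      exact mul_le_mul_right h1 _
    have h3 : ((ν n).totalVariation A).toReal ≤ ((w n)⁻¹ * m A).toReal :=
      ENNReal.toReal_mono (ENNReal.mul_ne_top (by rw [ENNReal.inv_ne_top]; exact hwne0 n) (measure_ne_top _ _)) h2
    rw [ENNReal.toReal_mul] at h3
    exact (abs_apply_le (ν n) A).trans h3
  -- continuity of evaluations on the measure algebra
  have hcont : ∀ n, Continuous fun A : MSet m => ν n A.carrier := by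
    intro n
    have hlip : ∀ A B : MSet m, dist (ν n A.carrier) (ν n B.carrier)
        ≤ (2 * ((w n)⁻¹).toReal) * dist A B := by
      intro A B
      rw [Real.dist_eq, apply_sub_apply (ν n) A.meas B.meas, MSet.dist_def]
      have hd1 : |ν n (A.carrier \ B.carrier)|
          ≤ ((w n)⁻¹).toReal * (m (A.carrier \ B.carrier)).toReal :=
        hdom n _ (A.meas.diff B.meas)
      have hd2 : |ν n (B.carrier \ A.carrier)|
          ≤ ((w n)⁻¹).toReal * (m (B.carrier \ A.carrier)).toReal :=
        hdom n _ (B.meas.diff A.meas)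
      have hs1 : (m (A.carrier \ B.carrier)).toReal
          ≤ (m (symmDiff A.carrier B.carrier)).toReal := by
        apply ENNReal.toReal_mono (measure_ne_top _ _)
        apply measure_mono
        rw [Set.symmDiff_def]
        exact Set.subset_union_left
      have hs2 : (m (B.carrier \ A.carrier)).toReal
          ≤ (m (symmDiff A.carrier B.carrier)).toReal := by
        apply ENNReal.toReal_mono (measure_ne_top _ _)
        apply measure_mono
        rw [Set.symmDiff_def]
        exact Set.subset_union_right
      have hwpos : 0 ≤ ((w n)⁻¹).toReal := ENNReal.toReal_nonneg
      calc |ν n (A.carrier \ B.carrier) - ν n (B.carrier \ A.carrier)|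
          ≤ |ν n (A.carrier \ B.carrier)| + |ν n (B.carrier \ A.carrier)| := abs_sub _ _
        _ ≤ (2 * ((w n)⁻¹).toReal) * (m (symmDiff A.carrier B.carrier)).toReal := by nlinarith
    apply continuous_iff_continuousAt.2
    intro B
    apply Metric.continuousAt_iff.2
    intro ε hε
    refine ⟨ε / (2 * ((w n)⁻¹).toReal + 1), by positivity, fun {A} hAB => ?_⟩
    calc dist (ν n A.carrier) (ν n B.carrier) ≤ (2 * ((w n)⁻¹).toReal) * dist A B := hlip A B
      _ ≤ (2 * ((w n)⁻¹).toReal + 1) * dist A B := by nlinarith [dist_nonneg (x := A) (y := B)]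
      _ < (2 * ((w n)⁻¹).toReal + 1) * (ε / (2 * ((w n)⁻¹).toReal + 1)) := by
          apply mul_lt_mul_of_pos_left hAB (by positivity)
      _ = ε := by field_simp
  -- uniform smallness via Baire
  have main : ∀ ε : ℝ, 0 < ε → ∃ δ : ℝ, 0 < δ ∧ ∀ D : Set Ω, MeasurableSet D →
      (m D).toReal < δ → ∀ n, |ν n D| ≤ 3 * ε := by
    intro ε hε
    set F : ℕ → Set (MSet m) := fun N =>
      {A | ∀ p, N ≤ p → ∀ q, N ≤ q → |ν p A.carrier - ν q A.carrier| ≤ ε} with hF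
    have hFclosed : ∀ N, IsClosed (F N) := by
      intro N
      have : F N = ⋂ (p) (_ : N ≤ p) (q) (_ : N ≤ q),
          {A : MSet m | |ν p A.carrier - ν q A.carrier| ≤ ε} := by
        ext B
        simp [hF, Set.mem_iInter]
      rw [this]
      refine isClosed_iInter fun p => isClosed_iInter fun _ =>
        isClosed_iInter fun q => isClosed_iInter fun _ => ?_
      exact isClosed_le (Continuous.abs ((hcont p).sub (hcont q))) continuous_const
    have hFcover : ⋃ N, F N = Set.univ := by
      ext B
      simp only [Set.mem_iUnion, Set.mem_univ, iff_true]
      have hc : CauchySeq fun n => ν n B.carrier := (hconv _ B.meas).cauchySeq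
      obtain ⟨N, hN⟩ := Metric.cauchySeq_iff.1 hc ε hε
      exact ⟨N, fun p hp q hq => le_of_lt (by simpa [Real.dist_eq] using hN p hp q hq)⟩
    haveI : Nonempty (MSet m) := ⟨⟨∅, MeasurableSet.empty⟩⟩
    obtain ⟨N, hN⟩ := nonempty_interior_of_iUnion_of_closed hFclosed hFcover
    obtain ⟨A₀, hA₀⟩ := hN
    obtain ⟨δ₀, hδ₀pos, hball⟩ := Metric.isOpen_iff.1 isOpen_interior A₀ hA₀
    have hballF : Metric.ball A₀ δ₀ ⊆ F N := hball.trans interior_subset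
    -- constant controlling small indices
    set K : ℝ := (∑ j ∈ Finset.range (N+1), ((w j)⁻¹).toReal) + 1 with hK
    have hKpos : 0 < K := by
      rw [hK]
      have : (0:ℝ) ≤ ∑ j ∈ Finset.range (N+1), ((w j)⁻¹).toReal :=
        Finset.sum_nonneg fun j _ => ENNReal.toReal_nonneg
      linarith
    have hKle : ∀ j, j ≤ N → ((w j)⁻¹).toReal ≤ K := by
      intro j hj
      rw [hK]
      have h1 : ((w j)⁻¹).toReal ≤ ∑ i ∈ Finset.range (N+1), ((w i)⁻¹).toReal :=
        Finset.single_le_sum (f := fun i => ((w i)⁻¹).toReal)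
          (fun i _ => ENNReal.toReal_nonneg) (Finset.mem_range.2 (by omega))
      linarith
    refine ⟨min δ₀ (ε / K), lt_min hδ₀pos (by positivity), ?_⟩
    intro D hD hmD n
    have hmD₀ : (m D).toReal < δ₀ := lt_of_lt_of_le hmD (min_le_left _ _)
    have hmDK : (m D).toReal < ε / K := lt_of_lt_of_le hmD (min_le_right _ _)
    have hsmall : ∀ j, j ≤ N → |ν j D| ≤ ε := by
      intro j hj
      calc |ν j D| ≤ ((w j)⁻¹).toReal * (m D).toReal := hdom j D hD
        _ ≤ K * (m D).toReal := by
            apply mul_le_mul_of_nonneg_right (hKle j hj) ENNReal.toReal_nonneg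
        _ ≤ K * (ε / K) := by
            apply mul_le_mul_of_nonneg_left (le_of_lt hmDK) hKpos.le
        _ = ε := by field_simp
    by_cases hn : n ≤ N
    · linarith [hsmall n hn]
    · push_neg at hn
      set X₁ : MSet m := ⟨A₀.carrier ∪ D, A₀.meas.union hD⟩ with hX₁
      set X₂ : MSet m := ⟨A₀.carrier \ D, A₀.meas.diff hD⟩ with hX₂
      have hd1 : dist X₁ A₀ < δ₀ := by
        rw [MSet.dist_def]
        have hsub : symmDiff X₁.carrier A₀.carrier ⊆ D := by
          intro x hx
          rw [Set.mem_symmDiff] at hx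
          rcases hx with ⟨hx1, hx2⟩ | ⟨hx1, hx2⟩
          · rcases hx1 with h | h
            · exact absurd h hx2
            · exact h
          · exact absurd (Or.inl hx1) hx2
        calc (m (symmDiff X₁.carrier A₀.carrier)).toReal ≤ (m D).toReal :=
            ENNReal.toReal_mono (measure_ne_top _ _) (measure_mono hsub)
          _ < δ₀ := hmD₀
      have hd2 : dist X₂ A₀ < δ₀ := by
        rw [MSet.dist_def]
        have hsub : symmDiff X₂.carrier A₀.carrier ⊆ D := by
          intro x hx
          rw [Set.mem_symmDiff] at hx
          rcases hx with ⟨hx1, hx2⟩ | ⟨hx1, hx2⟩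
          · exact absurd hx1.1 hx2
          · by_contra hxD
            exact hx2 ⟨hx1, hxD⟩
        calc (m (symmDiff X₂.carrier A₀.carrier)).toReal ≤ (m D).toReal :=
            ENNReal.toReal_mono (measure_ne_top _ _) (measure_mono hsub)
          _ < δ₀ := hmD₀
      have hF1 : |ν n X₁.carrier - ν N X₁.carrier| ≤ ε :=
        hballF (Metric.mem_ball.2 hd1) n hn.le N le_rfl
      have hF2 : |ν n X₂.carrier - ν N X₂.carrier| ≤ ε :=
        hballF (Metric.mem_ball.2 hd2) n hn.le N le_rfl
      have hdec : ∀ j : ℕ, ν j X₁.carrier = ν j X₂.carrier + ν j D := by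
        intro j
        have hu : X₂.carrier ∪ D = X₁.carrier := Set.diff_union_self
        rw [← hu, VectorMeasure.of_union disjoint_sdiff_self_left (A₀.meas.diff hD) hD]
      have hεN := hsmall N le_rfl
      have hx : ν n D = (ν n X₁.carrier - ν N X₁.carrier)
          - (ν n X₂.carrier - ν N X₂.carrier) + ν N D := by
        have h1 := hdec n
        have h2 := hdec N
        linarith
      rw [hx]
      calc |(ν n X₁.carrier - ν N X₁.carrier) - (ν n X₂.carrier - ν N X₂.carrier) + ν N D|
          ≤ |ν n X₁.carrier - ν N X₁.carrier| + |ν n X₂.carrier - ν N X₂.carrier| + |ν N D| := by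
            refine (abs_add_le _ _).trans (add_le_add_left ?_ _)
            exact (abs_sub _ _).trans le_rfl
        _ ≤ 3 * ε := by linarith
  -- finite additivity of lam
  have lam_union : ∀ {A B : Set Ω}, MeasurableSet A → MeasurableSet B → Disjoint A B →
      lam (A ∪ B) = lam A + lam B := by
    intro A B hA hB hAB
    refine tendsto_nhds_unique (hconv _ (hA.union hB)) ?_
    have := (hconv A hA).add (hconv B hB)
    exact this.congr fun n => (VectorMeasure.of_union hAB hA hB).symm
  -- construct the signed measure
  refine ⟨⟨lam, ?_, hlam0, ?_⟩, fun A => rfl⟩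
  · refine tendsto_nhds_unique (hconv ∅ MeasurableSet.empty) ?_
    have : (fun n => (ν n) ∅) = fun _ => (0:ℝ) := funext fun n => VectorMeasure.empty _
    rw [this]
    exact tendsto_const_nhds
  · intro f hfmeas hfdisj
    have hUmeas : MeasurableSet (⋃ i, f i) := MeasurableSet.iUnion hfmeas
    -- finite additivity over finsets
    have lam_fin : ∀ s : Finset ℕ, lam (⋃ i ∈ s, f i) = ∑ i ∈ s, lam (f i) := by
      intro s
      induction s using Finset.induction_on with
      | empty =>
        simp only [Finset.sum_empty]
        rw [show (⋃ i ∈ (∅ : Finset ℕ), f i) = (∅ : Set Ω) by simp]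
        refine tendsto_nhds_unique (hconv ∅ MeasurableSet.empty) ?_
        have : (fun n => (ν n) ∅) = fun _ => (0:ℝ) := funext fun n => VectorMeasure.empty _
        rw [this]
        exact tendsto_const_nhds
      | insert a s' hni ih =>
        rw [Finset.set_biUnion_insert, Finset.sum_insert hni, ← ih]
        apply lam_union (hfmeas a) (s'.measurableSet_biUnion fun i _ => hfmeas i)
        apply Set.disjoint_iUnion₂_right.2
        intro i hi
        exact hfdisj (fun h => hni (h ▸ hi))
      -- disjointness used above
    -- summability of measures
    have hmsum : HasSum (fun i => (m (f i)).toReal) ((m (⋃ i, f i)).toReal) := by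
      have h1 : m (⋃ i, f i) = ∑' i, m (f i) := measure_iUnion hfdisj hfmeas
      have h2 : (∑' i, m (f i)) ≠ ⊤ := by rw [← h1]; exact measure_ne_top _ _
      have h3 := ENNReal.hasSum_toReal h2
      rwa [← ENNReal.tsum_toReal_eq (fun i => measure_ne_top _ _), ← h1] at h3  -- fix below
    rw [HasSum]
    rw [Metric.tendsto_nhds]
    intro ε hε
    obtain ⟨δ, hδ, hu⟩ := main (ε/4) (by positivity)
    -- eventually the tail is small
    have hev : ∀ᶠ s : Finset ℕ in atTop,
        (m (⋃ i, f i)).toReal - ∑ i ∈ s, (m (f i)).toReal < δ := by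
      have := hmsum.eventually (eventually_gt_nhds
        (show (m (⋃ i, f i)).toReal - δ < (m (⋃ i, f i)).toReal by linarith))
      exact this.mono fun s hs => by linarith
    filter_upwards [hev] with s hs
    set R : Set Ω := ⋃ i, ⋃ (_ : i ∉ s), f i with hR
    have hRmeas : MeasurableSet R :=
      MeasurableSet.iUnion fun i => MeasurableSet.iUnion fun _ => hfmeas i
    have hsplit : (⋃ i ∈ s, f i) ∪ R = ⋃ i, f i := by
      ext x
      simp only [hR, Set.mem_union, Set.mem_iUnion]
      constructor
      · rintro (⟨i, _, h⟩ | ⟨i, _, h⟩) <;> exact ⟨i, h⟩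
      · rintro ⟨i, h⟩
        by_cases hi : i ∈ s
        · exact Or.inl ⟨i, hi, h⟩
        · exact Or.inr ⟨i, hi, h⟩
    have hdisjsR : Disjoint (⋃ i ∈ s, f i) R := by
      rw [Set.disjoint_iUnion₂_left]
      intro i hi
      rw [hR, Set.disjoint_iUnion_right]
      intro j
      rw [Set.disjoint_iUnion_right]
      intro hj
      exact hfdisj (fun h => hj (h ▸ hi))
    have hmR : (m R).toReal < δ := by
      have h1 : m ((⋃ i ∈ s, f i)) + m R = m (⋃ i, f i) := by
        rw [← measure_union hdisjsR hRmeas, hsplit]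
      have h2 : m (⋃ i ∈ s, f i) = ∑ i ∈ s, m (f i) :=
        measure_biUnion_finset (fun i _ j _ hij => hfdisj hij) (fun i _ => hfmeas i)
      have h3 : (m (⋃ i ∈ s, f i)).toReal = ∑ i ∈ s, (m (f i)).toReal := by
        rw [h2, ENNReal.toReal_sum (fun i _ => measure_ne_top _ _)]
      have h4 : (m R).toReal = (m (⋃ i, f i)).toReal - ∑ i ∈ s, (m (f i)).toReal := by
        rw [← h3, ← h1, ENNReal.toReal_add (measure_ne_top _ _) (measure_ne_top _ _)]
        ring
      rw [h4]
      exact hs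
    have hlamR : |lam R| ≤ 3 * (ε/4) := by
      have h1 : ∀ n, |ν n R| ≤ 3 * (ε/4) := fun n => hu R hRmeas hmR n
      exact le_of_tendsto (hconv R hRmeas).abs (Filter.Eventually.of_forall h1)
    have hlamU : lam (⋃ i, f i) = (∑ i ∈ s, lam (f i)) + lam R := by
      rw [← lam_fin s, ← lam_union (s.measurableSet_biUnion fun i _ => hfmeas i) hRmeas hdisjsR,
        hsplit]
    rw [Real.dist_eq, hlamU]
    have : |(∑ i ∈ s, lam (f i)) - ((∑ i ∈ s, lam (f i)) + lam R)| = |lam R| := by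
      rw [abs_sub_comm]
      congr 1
      ring
    rw [this]
    linarith

/-- Duality: `⟨T'σ, f⟩ = ⟨σ, Tf⟩` for a bounded kernel `κ`. -/
theorem dual_sInt {κ : Ω → SignedMeasure Ω}
    (hκmeas : ∀ A : Set Ω, MeasurableSet A → Measurable fun x => κ x A)
    {C : ℝ} (hκb : ∀ x, tvNorm (κ x) ≤ C)
    (σ : SignedMeasure Ω) (Sσ : SignedMeasure Ω)
    (hSσ : ∀ A : Set Ω, MeasurableSet A → Sσ A = sInt σ (fun x => κ x A))
    {f : Ω → ℝ} (hfm : Measurable f) {c : ℝ} (hfb : ∀ x, |f x| ≤ c)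
    (hint : Measurable fun x => sInt (κ x) f) :
    sInt Sσ f = sInt σ (fun x => sInt (κ x) f) := by
  set C' : ℝ := max C 0 with hC'
  have hκb' : ∀ x, tvNorm (κ x) ≤ C' := fun x => (hκb x).trans (le_max_left _ _)
  have hC'0 : 0 ≤ C' := le_max_right _ _
  -- the finite-range case
  have hfr : ∀ g : Ω → ℝ, Measurable g → ∀ hfin : (Set.range g).Finite,
      sInt Sσ g = sInt σ (fun x => sInt (κ x) g) := by
    intro g hgm hgfin
    have hbd : ∀ v : ℝ, IsBddMeas (fun x => v * (κ x (g ⁻¹' {v}))) := by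
      intro v
      refine ⟨(hκmeas _ (hgm (measurableSet_singleton v))).const_mul v, |v| * C', fun x => ?_⟩
      rw [abs_mul]
      exact mul_le_mul_of_nonneg_left
        ((abs_apply_le_tvNorm (κ x) _).trans (hκb' x)) (abs_nonneg v)
    have hrhs : (fun x => sInt (κ x) g)
        = fun x => ∑ v ∈ hgfin.toFinset, v * (κ x (g ⁻¹' {v})) := by
      funext x
      rw [sInt_finite_range (κ x) hgm hgfin]
    rw [sInt_finite_range Sσ hgm hgfin, hrhs, sInt_sum σ (fun v _ => hbd v)]
    refine Finset.sum_congr rfl fun v _ => ?_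
    rw [hSσ _ (hgm (measurableSet_singleton v)), ← sInt_mul]
  -- approximation
  have hKnonneg : (0:ℝ) ≤ tvNorm Sσ + C' * tvNorm σ :=
    add_nonneg (tvNorm_nonneg _) (mul_nonneg hC'0 (tvNorm_nonneg _))
  have key : ∀ ε : ℝ, 0 < ε →
      |sInt Sσ f - sInt σ (fun x => sInt (κ x) f)| ≤ ε * (tvNorm Sσ + C' * tvNorm σ) := by
    intro ε hε
    obtain ⟨g, hgm, hgfin, hgf, hgb⟩ := exists_finite_range_approx hfm hfb hε
    have hfbm : IsBddMeas f := ⟨hfm, c, hfb⟩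
    have hgbm : IsBddMeas g := ⟨hgm, c + ε, hgb⟩
    have h1 : |sInt Sσ f - sInt Sσ g| ≤ ε * tvNorm Sσ := by
      rw [← sInt_sub Sσ hfbm hgbm]
      exact sInt_abs_le Sσ (hfm.sub hgm) (fun x => by rw [abs_sub_comm]; exact hgf x)
    have hintg : Measurable fun x => sInt (κ x) g := by
      have : (fun x => sInt (κ x) g)
          = fun x => ∑ v ∈ hgfin.toFinset, v * (κ x (g ⁻¹' {v})) := by
        funext x
        rw [sInt_finite_range (κ x) hgm hgfin]
      rw [this]
      exact Finset.measurable_sum _ fun v _ =>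
        (hκmeas _ (hgm (measurableSet_singleton v))).const_mul v
    have hbint : IsBddMeas fun x => sInt (κ x) f :=
      ⟨hint, c * C', fun x => (sInt_abs_le (κ x) hfm hfb).trans (by
        nlinarith [tvNorm_nonneg (κ x), hκb' x, hfb x, abs_nonneg (f x)])⟩
    have hbintg : IsBddMeas fun x => sInt (κ x) g :=
      ⟨hintg, (c + ε) * C', fun x => (sInt_abs_le (κ x) hgm hgb).trans (by
        nlinarith [tvNorm_nonneg (κ x), hκb' x, hgb x, abs_nonneg (g x)])⟩
    have h2 : |sInt σ (fun x => sInt (κ x) g) - sInt σ (fun x => sInt (κ x) f)|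
        ≤ ε * C' * tvNorm σ := by
      rw [← sInt_sub σ hbintg hbint]
      refine le_trans (sInt_abs_le σ (hintg.sub hint) (c := ε * C') fun x => ?_) le_rfl
      have hh : sInt (κ x) g - sInt (κ x) f = sInt (κ x) (fun y => g y - f y) :=
        (sInt_sub (κ x) hgbm hfbm).symm
      rw [hh]
      exact (sInt_abs_le (κ x) (hgm.sub hfm) hgf).trans
        (mul_le_mul_of_nonneg_left (hκb' x) hε.le)
    have h3 : sInt Sσ g = sInt σ (fun x => sInt (κ x) g) := hfr g hgm hgfin
    calc |sInt Sσ f - sInt σ (fun x => sInt (κ x) f)|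
        ≤ |sInt Sσ f - sInt Sσ g| + |sInt Sσ g - sInt σ (fun x => sInt (κ x) f)| :=
          abs_sub_le _ _ _
      _ = |sInt Sσ f - sInt Sσ g|
          + |sInt σ (fun x => sInt (κ x) g) - sInt σ (fun x => sInt (κ x) f)| := by rw [h3]
      _ ≤ ε * tvNorm Sσ + ε * C' * tvNorm σ := add_le_add h1 h2
      _ = ε * (tvNorm Sσ + C' * tvNorm σ) := by ring
  by_contra hne
  have hD : 0 < |sInt Sσ f - sInt σ (fun x => sInt (κ x) f)| :=
    abs_pos.2 (sub_ne_zero.2 hne)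
  set D := |sInt Sσ f - sInt σ (fun x => sInt (κ x) f)| with hDdef
  have hden : (0:ℝ) < 2 * (tvNorm Sσ + C' * tvNorm σ) + 2 := by linarith
  have hb := key (D / (2 * (tvNorm Sσ + C' * tvNorm σ) + 2)) (div_pos hD hden)
  rw [div_mul_eq_mul_div] at hb
  have h5 := (le_div_iff₀ hden).1 hb
  nlinarith
end SigAux

open SigAux

/-- **Weak convergence of a semigroup of kernel operators and of its dual semigroup.**
Let `T = (T t)_{t ∈ (0,∞)}` be a bounded semigroup of kernel operators on `B_b(Ω)` with
kernels `k t`, and let `S = (S t) = (T t')` be the dual semigroup on `M(Ω)`. Then the orbits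
of `S` converge in `σ(M(Ω), B_b(Ω))` if and only if the orbits of `T` converge in
`σ(B_b(Ω), M(Ω))`. -/
theorem kernel_semigroup_weak_convergence_iff_dual_weak_convergence
    {Ω : Type*} [MeasurableSpace Ω]
    (k : ℝ → Ω → SignedMeasure Ω)
    (hk : ∀ t : ℝ, 0 < t → IsBoundedKernel (k t))
    (T : ℝ → (Ω → ℝ) → Ω → ℝ)
    -- `T t` is the kernel operator on `B_b(Ω)` with kernel `k t`:
    (hT : ∀ t : ℝ, 0 < t → ∀ f : Ω → ℝ, IsBddMeas f → ∀ x, T t f x = sInt (k t x) f)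
    -- `T t` maps `B_b(Ω)` into itself:
    (hTmem : ∀ t : ℝ, 0 < t → ∀ f : Ω → ℝ, IsBddMeas f → IsBddMeas (T t f))
    -- semigroup law:
    (hsg : ∀ s t : ℝ, 0 < s → 0 < t → ∀ f : Ω → ℝ, IsBddMeas f →
      T (s + t) f = T s (T t f))
    -- boundedness of the semigroup:
    (hbdd : ∃ C : ℝ, ∀ t : ℝ, 0 < t → ∀ x, tvNorm (k t x) ≤ C)
    (S : ℝ → SignedMeasure Ω → SignedMeasure Ω)
    -- `S t = T t'` is the dual kernel operator on `M(Ω)`: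
    (hS : ∀ t : ℝ, 0 < t → ∀ (ν : SignedMeasure Ω) (A : Set Ω), MeasurableSet A →
      S t ν A = sInt ν (fun x => k t x A)) :
    -- (i) each orbit of `S` converges in `σ(M(Ω), B_b(Ω))` as `t → ∞`:
    (∀ μ : SignedMeasure Ω, ∃ Pμ : SignedMeasure Ω, ∀ f : Ω → ℝ, IsBddMeas f →
        Tendsto (fun t : ℝ => sInt (S t μ) f) atTop (𝓝 (sInt Pμ f))) ↔
    -- (ii) each orbit of `T` converges in `σ(B_b(Ω), M(Ω))` as `t → ∞`:
      (∀ f : Ω → ℝ, IsBddMeas f → ∃ Qf : Ω → ℝ, IsBddMeas Qf ∧ ∀ μ : SignedMeasure Ω,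
        Tendsto (fun t : ℝ => sInt μ (T t f)) atTop (𝓝 (sInt μ Qf))) := by
  classical
  obtain ⟨C₀, hC₀⟩ := hbdd
  set C : ℝ := max C₀ 0 with hCdef
  have hC : ∀ t : ℝ, 0 < t → ∀ x, tvNorm (k t x) ≤ C :=
    fun t ht x => (hC₀ t ht x).trans (le_max_left _ _)
  have hC0 : (0:ℝ) ≤ C := le_max_right _ _
  have hseq : Tendsto (fun n : ℕ => ((n:ℝ) + 1)) atTop atTop :=
    tendsto_atTop_add_const_right _ 1 tendsto_natCast_atTop_atTop
  have hnpos : ∀ n : ℕ, (0:ℝ) < (n:ℝ) + 1 := fun n => by positivity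
  constructor
  · -- (i) → (ii)
    intro hi f hf
    obtain ⟨hfm, c₀, hc₀⟩ := hf
    set c : ℝ := max c₀ 0 with hcdef
    have hfb : ∀ x, |f x| ≤ c := fun x => (hc₀ x).trans (le_max_left _ _)
    have hc0 : (0:ℝ) ≤ c := le_max_right _ _
    set δm : Ω → SignedMeasure Ω := fun x => (Measure.dirac x).toSignedMeasure with hδm
    have hSd : ∀ t : ℝ, 0 < t → ∀ x, S t (δm x) = k t x := by
      intro t ht x
      apply VectorMeasure.ext
      intro A hA
      rw [hS t ht _ A hA, hδm]
      rw [sInt_toSignedMeasure (Measure.dirac x) (fun y => k t y A)]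
      exact integral_dirac' _ x ((hk t ht).1 A hA).stronglyMeasurable
    set Pd : Ω → SignedMeasure Ω := fun x => (hi (δm x)).choose with hPd
    have hPdspec : ∀ x, Tendsto (fun t : ℝ => sInt (S t (δm x)) f) atTop
        (𝓝 (sInt (Pd x) f)) := fun x => (hi (δm x)).choose_spec f ⟨hfm, c₀, hc₀⟩
    set Qf : Ω → ℝ := fun x => sInt (Pd x) f with hQf
    have hptw : ∀ x, Tendsto (fun t : ℝ => T t f x) atTop (𝓝 (Qf x)) := by
      intro x
      refine (hPdspec x).congr' ?_
      filter_upwards [eventually_gt_atTop (0:ℝ)] with t ht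
      rw [hSd t ht x, hT t ht f ⟨hfm, c₀, hc₀⟩ x]
    have hbnd : ∀ t : ℝ, 0 < t → ∀ x, |T t f x| ≤ c * C := by
      intro t ht x
      rw [hT t ht f ⟨hfm, c₀, hc₀⟩ x]
      exact (sInt_abs_le (k t x) hfm hfb).trans
        (mul_le_mul_of_nonneg_left (hC t ht x) hc0)
    have hQm : Measurable Qf := by
      apply measurable_of_tendsto_metrizable
        (f := fun n : ℕ => T ((n:ℝ) + 1) f)
        (fun n => (hTmem _ (hnpos n) f ⟨hfm, c₀, hc₀⟩).1)
      rw [tendsto_pi_nhds]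
      exact fun x => (hptw x).comp hseq
    have hQb : ∀ x, |Qf x| ≤ c * C := by
      intro x
      refine le_of_tendsto (hptw x).abs ?_
      filter_upwards [eventually_gt_atTop (0:ℝ)] with t ht
      exact hbnd t ht x
    refine ⟨Qf, ⟨hQm, c * C, hQb⟩, fun μ => ?_⟩
    apply sInt_tendsto μ (c := c * C)
    · filter_upwards [eventually_gt_atTop (0:ℝ)] with t ht
      exact (hTmem t ht f ⟨hfm, c₀, hc₀⟩).1
    · filter_upwards [eventually_gt_atTop (0:ℝ)] with t ht
      exact hbnd t ht
    · exact hptw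
  · -- (ii) → (i)
    intro hii μ
    have hind : ∀ A : Set Ω, MeasurableSet A → IsBddMeas (A.indicator fun _ => (1:ℝ)) :=
      fun A hA => isBddMeas_indicator hA 1
    set lam : Set Ω → ℝ := fun A =>
      if hA : MeasurableSet A then sInt μ (hii _ (hind A hA)).choose else 0 with hlam
    set ν : ℕ → SignedMeasure Ω := fun n => S ((n:ℝ) + 1) μ with hν
    -- duality for all bounded measurable f
    have hdual : ∀ t : ℝ, 0 < t → ∀ f : Ω → ℝ, IsBddMeas f →
        sInt (S t μ) f = sInt μ (T t f) := by
      intro t ht f hf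
      obtain ⟨hfm, c, hfb⟩ := hf
      have h1 : (fun x => sInt (k t x) f) = T t f :=
        funext fun x => (hT t ht f ⟨hfm, c, hfb⟩ x).symm
      have hint : Measurable fun x => sInt (k t x) f := by
        rw [h1]; exact (hTmem t ht f ⟨hfm, c, hfb⟩).1
      have h2 := dual_sInt (hk t ht).1 (hC₀ t ht) μ (S t μ)
        (fun A hA => hS t ht μ A hA) hfm hfb hint
      rw [h2, h1]
    -- setwise convergence of ν n to lam
    have hconv : ∀ A : Set Ω, MeasurableSet A →
        Tendsto (fun n => ν n A) atTop (𝓝 (lam A)) := by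
      intro A hA
      have hQspec := (hii _ (hind A hA)).choose_spec.2 μ
      have hcomp : Tendsto (fun n : ℕ => sInt μ (T ((n:ℝ)+1) (A.indicator fun _ => 1)))
          atTop (𝓝 (sInt μ (hii _ (hind A hA)).choose)) := hQspec.comp hseq
      have heq : ∀ n : ℕ, ν n A = sInt μ (T ((n:ℝ)+1) (A.indicator fun _ => 1)) := by
        intro n
        have h1 : ν n A = sInt (S ((n:ℝ)+1) μ) (A.indicator fun _ => (1:ℝ)) := by
          rw [sInt_indicator _ hA 1, one_mul, hν]
        rw [h1, hdual _ (hnpos n) _ (hind A hA)]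
      have hlamA : lam A = sInt μ (hii _ (hind A hA)).choose := by
        rw [hlam]; exact dif_pos hA
      rw [hlamA]
      exact hcomp.congr fun n => (heq n).symm
    have hlam0 : ∀ A : Set Ω, ¬MeasurableSet A → lam A = 0 := by
      intro A hA; rw [hlam]; exact dif_neg hA
    obtain ⟨P, hP⟩ := nikodym ν lam hconv hlam0
    have hPconv : ∀ A : Set Ω, MeasurableSet A →
        Tendsto (fun n => ν n A) atTop (𝓝 (P A)) := fun A hA => (hP A) ▸ hconv A hA
    -- uniform bound on tvNorm (ν n)
    have hνb : ∀ n : ℕ, tvNorm (ν n) ≤ 2 * (C * tvNorm μ) := by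
      intro n
      apply tvNorm_le_of_bound
      intro A hA
      rw [hν]
      show |S ((n:ℝ)+1) μ A| ≤ C * tvNorm μ
      rw [hS _ (hnpos n) μ A hA]
      exact sInt_abs_le μ ((hk _ (hnpos n)).1 A hA)
        (fun x => (abs_apply_le_tvNorm _ _).trans (hC _ (hnpos n) x))
    refine ⟨P, ?_⟩
    intro f hf
    obtain ⟨Qf, hQfb, hQconv⟩ := hii f hf
    obtain ⟨hfm, c₀, hc₀⟩ := hf
    set c : ℝ := max c₀ 0 with hcdef
    have hfb : ∀ x, |f x| ≤ c := fun x => (hc₀ x).trans (le_max_left _ _)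
    have hc0 : (0:ℝ) ≤ c := le_max_right _ _
    -- sInt (ν n) f converges to sInt μ Qf
    have h1 : Tendsto (fun n : ℕ => sInt (ν n) f) atTop (𝓝 (sInt μ Qf)) := by
      have := (hQconv μ).comp hseq
      exact this.congr fun n => (hdual _ (hnpos n) f ⟨hfm, c₀, hc₀⟩).symm
    -- sInt (ν n) f converges to sInt P f
    have h2 : Tendsto (fun n : ℕ => sInt (ν n) f) atTop (𝓝 (sInt P f)) := by
      rw [Metric.tendsto_atTop]
      intro ε hε
      set K : ℝ := 2 * (C * tvNorm μ) + tvNorm P + 1 with hKdef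
      have hK0 : 0 < K := by
        have := tvNorm_nonneg P
        have := tvNorm_nonneg μ
        have h3 : 0 ≤ C * tvNorm μ := mul_nonneg hC0 (tvNorm_nonneg μ)
        rw [hKdef]; linarith
      have hKν : ∀ n, tvNorm (ν n) ≤ K := by
        intro n
        have := tvNorm_nonneg P
        rw [hKdef]
        linarith [hνb n]
      have hKP : tvNorm P ≤ K := by
        have h3 : 0 ≤ C * tvNorm μ := mul_nonneg hC0 (tvNorm_nonneg μ)
        rw [hKdef]; linarith
      obtain ⟨g, hgm, hgfin, hgf, hgb⟩ :=
        exists_finite_range_approx hfm hfb (ε := ε / (3 * K)) (by positivity)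
      have hgbm : IsBddMeas g := ⟨hgm, c + ε / (3 * K), hgb⟩
      -- convergence for the finite-range function g
      have hg : Tendsto (fun n : ℕ => sInt (ν n) g) atTop (𝓝 (sInt P g)) := by
        have hrw : ∀ ρ : SignedMeasure Ω,
            sInt ρ g = ∑ v ∈ hgfin.toFinset, v * ρ (g ⁻¹' {v}) :=
          fun ρ => sInt_finite_range ρ hgm hgfin
        rw [hrw P]
        have : Tendsto (fun n : ℕ => ∑ v ∈ hgfin.toFinset, v * ν n (g ⁻¹' {v})) atTop
            (𝓝 (∑ v ∈ hgfin.toFinset, v * P (g ⁻¹' {v}))) := by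
          apply tendsto_finset_sum
          intro v _
          exact (hPconv _ (hgm (measurableSet_singleton v))).const_mul v
        exact this.congr fun n => (hrw (ν n)).symm
      obtain ⟨N, hN⟩ := Metric.tendsto_atTop.1 hg (ε / 3) (by positivity)
      refine ⟨N, fun n hn => ?_⟩
      have hNn := hN n hn
      rw [Real.dist_eq] at hNn ⊢
      have e1 : |sInt (ν n) f - sInt (ν n) g| ≤ (ε / (3 * K)) * K := by
        rw [← sInt_sub (ν n) ⟨hfm, c₀, hc₀⟩ hgbm]
        refine (sInt_abs_le (ν n) (hfm.sub hgm) (c := ε / (3*K))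
          (fun x => by rw [Pi.sub_apply, abs_sub_comm]; exact hgf x)).trans ?_
        exact mul_le_mul_of_nonneg_left (hKν n) (by positivity)
      have e2 : |sInt P g - sInt P f| ≤ (ε / (3 * K)) * K := by
        rw [← sInt_sub P hgbm ⟨hfm, c₀, hc₀⟩]
        refine (sInt_abs_le P (hgm.sub hfm) (c := ε / (3*K)) hgf).trans ?_
        exact mul_le_mul_of_nonneg_left hKP (by positivity)
      have e3 : (ε / (3 * K)) * K = ε / 3 := by field_simp
      calc |sInt (ν n) f - sInt P f|
          ≤ |sInt (ν n) f - sInt (ν n) g| + |sInt (ν n) g - sInt P f| := abs_sub_le _ _ _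
        _ ≤ |sInt (ν n) f - sInt (ν n) g| + (|sInt (ν n) g - sInt P g|
            + |sInt P g - sInt P f|) := by linarith [abs_sub_le (sInt (ν n) g) (sInt P g) (sInt P f)]
        _ < ε / 3 + (ε / 3 + ε / 3) := by
            rw [e3] at e1 e2
            linarith
        _ = ε := by ring
    have hfinal : sInt P f = sInt μ Qf := tendsto_nhds_unique h2 h1
    have := hQconv μ
    rw [← hfinal] at this
    refine this.congr' ?_
    filter_upwards [eventually_gt_atTop (0:ℝ)] with t ht
    exact (hdual t ht f ⟨hfm, c₀, hc₀⟩).symm
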